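/- For n ≥ 4 and 0 < p_a < 1, the arc random digraph D(n,p_a) is not a vertex random digraph: there exist no probability space (Ω,μ) and measurable function φ : Ω × Ω → {0,1} such that for every digraph D on [n], p_a^{|A(D)|}(1−p_a)^{n(n−1)−|A(D)|} = ∫ ∏_{(i,j)∈A(D)} φ(x_i,x_j) · ∏_{(i,j)∉A(D), i≠j} (1 − φ(x_i,x_j)) dμⁿ(x). -/

import Mathlib

open MeasureTheory Finset

/-- A finset of ordered pairs is (the arc set of) a digraph on `Fin n` if it has no loops. -/
def IsDigraph {n : ℕ} (A : Finset (Fin n × Fin n)) : Prop := ∀ p ∈ A, p.1 ≠ p.2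

/-- The probability that the vertex-arc random digraph `D(n, Ω, μ, φ)` equals the digraph
with arc set `A`. -/
noncomputable def vardP {Ω : Type*} [MeasurableSpace Ω] (μ : Measure Ω) {n : ℕ}
    (φ : Ω → Ω → ℝ) (A : Finset (Fin n × Fin n)) : ℝ :=
  ∫ x : Fin n → Ω,
    (∏ p ∈ A, φ (x p.1) (x p.2)) *
      ∏ p ∈ Finset.univ.filter (fun p : Fin n × Fin n => p.1 ≠ p.2 ∧ p ∉ A),
        (1 - φ (x p.1) (x p.2)) ∂(Measure.pi fun _ : Fin n => μ)



lemma exists_countable_generateFrom {α : Type*} {S : Set (Set α)} {s : Set α}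
    (hs : MeasurableSet[MeasurableSpace.generateFrom S] s) :
    ∃ T, T ⊆ S ∧ T.Countable ∧ MeasurableSet[MeasurableSpace.generateFrom T] s := by
  induction s, hs using MeasurableSpace.generateFrom_induction with
  | hC t ht _ =>
    refine ⟨{t}, ?_, Set.countable_singleton t,
      MeasurableSpace.measurableSet_generateFrom rfl⟩
    simpa using ht
  | empty =>
    exact ⟨∅, Set.empty_subset _, Set.countable_empty, @MeasurableSet.empty α (MeasurableSpace.generateFrom ∅)⟩
  | compl t ht ih =>
    obtain ⟨T, h1, h2, h3⟩ := ih
    exact ⟨T, h1, h2, MeasurableSet.compl h3⟩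
  | iUnion f hf ih =>
    choose T h1 h2 h3 using ih
    refine ⟨⋃ n, T n, Set.iUnion_subset h1, Set.countable_iUnion h2, MeasurableSet.iUnion ?_⟩
    intro n
    exact MeasurableSpace.generateFrom_mono (Set.subset_iUnion T n) _ (h3 n)

section Moments
variable {Ω : Type*} [MeasurableSpace Ω] (μ : Measure Ω) [IsProbabilityMeasure μ]
  {n : ℕ} (φ : Ω → Ω → ℝ)

lemma card_allArcs (n : ℕ) :
    (Finset.univ.filter (fun p : Fin n × Fin n => p.1 ≠ p.2)).card = n * (n - 1) := by
  classical
  have hdiag : (Finset.univ.filter (fun p : Fin n × Fin n => p.1 = p.2))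
      = Finset.univ.image (fun i : Fin n => (i, i)) := by
    ext ⟨i, j⟩
    simp only [mem_filter, mem_univ, true_and, mem_image, Prod.mk.injEq]
    constructor
    · rintro rfl; exact ⟨i, rfl, rfl⟩
    · rintro ⟨k, rfl, rfl⟩; rfl
  have hdiagcard : (Finset.univ.filter (fun p : Fin n × Fin n => p.1 = p.2)).card = n := by
    rw [hdiag, Finset.card_image_of_injective _ (fun i j hij => by simpa using congrArg Prod.fst hij)]
    simp
  have hsplit := Finset.card_filter_add_card_filter_not
    (s := (Finset.univ : Finset (Fin n × Fin n))) (p := fun p => p.1 = p.2)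
  have huniv : (Finset.univ : Finset (Fin n × Fin n)).card = n * n := by
    simp [Finset.card_univ]
  have : n * (n - 1) = n * n - n := by
    rcases n with - | m
    · simp
    · simp only [Nat.add_sub_cancel]
      rw [Nat.succ_mul, Nat.mul_succ]
      rw [Nat.succ_mul]
      omega
  rw [this]
  simp only [hdiagcard, huniv, ne_eq] at hsplit ⊢
  omega

end Moments

section M2
variable {Ω : Type*} [MeasurableSpace Ω] {μ : Measure Ω} [IsProbabilityMeasure μ]
  {n : ℕ} {φ : Ω → Ω → ℝ} {pa : ℝ}

lemma meas_arc (hmeas : Measurable (Function.uncurry φ)) (i j : Fin n) :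
    Measurable fun x : Fin n → Ω => φ (x i) (x j) := by
  have : (fun x : Fin n → Ω => φ (x i) (x j))
      = (Function.uncurry φ) ∘ (fun x => (x i, x j)) := rfl
  rw [this]
  exact hmeas.comp ((measurable_pi_apply i).prodMk (measurable_pi_apply j))

lemma meas_arcprod (hmeas : Measurable (Function.uncurry φ))
    (A : Finset (Fin n × Fin n)) :
    Measurable fun x : Fin n → Ω => ∏ p ∈ A, φ (x p.1) (x p.2) := by
  exact Finset.measurable_prod _ (fun p _ => meas_arc hmeas p.1 p.2)

lemma integrable_arcprod (hmeas : Measurable (Function.uncurry φ))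
    (h01 : ∀ x y, φ x y = 0 ∨ φ x y = 1)
    (A B : Finset (Fin n × Fin n)) :
    Integrable (fun x : Fin n → Ω =>
      (∏ p ∈ A, φ (x p.1) (x p.2)) * ∏ p ∈ B, (1 - φ (x p.1) (x p.2)))
      (Measure.pi fun _ : Fin n => μ) := by
  have hb : ∀ u v : Ω, |φ u v| ≤ 1 := by
    intro u v; rcases h01 u v with h | h <;> rw [h] <;> norm_num
  have hmeas2 : Measurable fun x : Fin n → Ω =>
      (∏ p ∈ A, φ (x p.1) (x p.2)) * ∏ p ∈ B, (1 - φ (x p.1) (x p.2)) := by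
    refine (meas_arcprod hmeas A).mul (Finset.measurable_prod _ (fun p _ => ?_))
    exact measurable_const.sub (meas_arc hmeas p.1 p.2)
  refine (integrable_const (1 : ℝ)).mono' hmeas2.aestronglyMeasurable (ae_of_all _ ?_)
  intro x
  rw [Real.norm_eq_abs, abs_mul]
  have h1 : |∏ p ∈ A, φ (x p.1) (x p.2)| ≤ 1 := by
    rw [Finset.abs_prod]
    refine Finset.prod_le_one (fun p _ => abs_nonneg _) (fun p _ => hb _ _)
  have h2 : |∏ p ∈ B, (1 - φ (x p.1) (x p.2))| ≤ 1 := by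
    rw [Finset.abs_prod]
    refine Finset.prod_le_one (fun p _ => abs_nonneg _) (fun p _ => ?_)
    rcases h01 (x p.1) (x p.2) with h | h <;> rw [h] <;> norm_num
  calc |∏ p ∈ A, φ (x p.1) (x p.2)| * |∏ p ∈ B, (1 - φ (x p.1) (x p.2))|
      ≤ 1 * 1 := mul_le_mul h1 h2 (abs_nonneg _) zero_le_one
    _ = 1 := by ring

lemma momentA (hmeas : Measurable (Function.uncurry φ))
    (h01 : ∀ x y, φ x y = 0 ∨ φ x y = 1)
    (h : ∀ A : Finset (Fin n × Fin n), IsDigraph A →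
        pa ^ A.card * (1 - pa) ^ (n * (n - 1) - A.card) = vardP μ φ A)
    (T : Finset (Fin n × Fin n))
    (hT : T ⊆ Finset.univ.filter (fun p : Fin n × Fin n => p.1 ≠ p.2)) :
    ∫ x : Fin n → Ω, ∏ p ∈ T, φ (x p.1) (x p.2)
      ∂(Measure.pi fun _ : Fin n => μ) = pa ^ T.card := by
  classical
  set allArcs := Finset.univ.filter (fun p : Fin n × Fin n => p.1 ≠ p.2) with hallArcs
  set s := allArcs \ T with hs
  -- pointwise expansion
  have hpt : ∀ x : Fin n → Ω, (∏ p ∈ T, φ (x p.1) (x p.2))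
      = ∑ t ∈ s.powerset, (∏ p ∈ T ∪ t, φ (x p.1) (x p.2)) *
          ∏ p ∈ allArcs \ (T ∪ t), (1 - φ (x p.1) (x p.2)) := by
    intro x
    have hone : (∏ p ∈ s, (φ (x p.1) (x p.2) + (1 - φ (x p.1) (x p.2)))) = 1 := by
      have h1 : ∀ p ∈ s, φ (x p.1) (x p.2) + (1 - φ (x p.1) (x p.2)) = 1 :=
        fun p _ => by ring
      rw [Finset.prod_congr rfl h1, Finset.prod_const_one]
    have := Finset.prod_add (fun p : Fin n × Fin n => φ (x p.1) (x p.2))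
      (fun p => 1 - φ (x p.1) (x p.2)) s
    calc (∏ p ∈ T, φ (x p.1) (x p.2))
        = (∏ p ∈ T, φ (x p.1) (x p.2)) *
            ∏ p ∈ s, (φ (x p.1) (x p.2) + (1 - φ (x p.1) (x p.2))) := by
          rw [hone, mul_one]
      _ = ∑ t ∈ s.powerset, (∏ p ∈ T ∪ t, φ (x p.1) (x p.2)) *
            ∏ p ∈ allArcs \ (T ∪ t), (1 - φ (x p.1) (x p.2)) := by
          rw [this, Finset.mul_sum]
          refine Finset.sum_congr rfl (fun t ht => ?_)
          rw [Finset.mem_powerset] at ht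
          have hdisj : Disjoint T t :=
            Finset.disjoint_of_subset_right ht Finset.disjoint_sdiff
          have hsd : s \ t = allArcs \ (T ∪ t) := by
            rw [hs, sdiff_sdiff, Finset.sup_eq_union]
          rw [Finset.prod_union hdisj, hsd]
          ring
  rw [integral_congr_ae (ae_of_all _ hpt)]
  rw [integral_finset_sum _ (fun t _ => integrable_arcprod hmeas h01 _ _)]
  -- evaluate each term with the hypothesis
  have hN : allArcs.card = n * (n - 1) := card_allArcs n
  have hterm : ∀ t ∈ s.powerset,
      (∫ x : Fin n → Ω, (∏ p ∈ T ∪ t, φ (x p.1) (x p.2)) *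
          ∏ p ∈ allArcs \ (T ∪ t), (1 - φ (x p.1) (x p.2))
        ∂(Measure.pi fun _ : Fin n => μ))
      = pa ^ (T.card + t.card) * (1 - pa) ^ (s.card - t.card) := by
    intro t ht
    rw [Finset.mem_powerset] at ht
    have hsub : T ∪ t ⊆ allArcs :=
      Finset.union_subset hT (ht.trans (Finset.sdiff_subset))
    have hdig : IsDigraph (T ∪ t) := by
      intro p hp
      have := hsub hp
      simpa [hallArcs] using (Finset.mem_filter.mp this).2
    have hset : Finset.univ.filter (fun p : Fin n × Fin n => p.1 ≠ p.2 ∧ p ∉ (T ∪ t))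
        = allArcs \ (T ∪ t) := by
      ext p
      simp [hallArcs, Finset.mem_sdiff, Finset.mem_filter]
    have hvard : vardP μ φ (T ∪ t) = ∫ x : Fin n → Ω,
        (∏ p ∈ T ∪ t, φ (x p.1) (x p.2)) *
          ∏ p ∈ allArcs \ (T ∪ t), (1 - φ (x p.1) (x p.2))
        ∂(Measure.pi fun _ : Fin n => μ) := by
      unfold vardP
      rw [hset]
    have hdisj : Disjoint T t :=
      Finset.disjoint_of_subset_right ht Finset.disjoint_sdiff
    have hcardU : (T ∪ t).card = T.card + t.card := Finset.card_union_of_disjoint hdisj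
    have hTle : T.card ≤ allArcs.card := Finset.card_le_card hT
    have hscard : s.card = allArcs.card - T.card := Finset.card_sdiff_of_subset hT
    have htle : t.card ≤ s.card := Finset.card_le_card ht
    have hexp : n * (n - 1) - (T.card + t.card) = s.card - t.card := by
      rw [← hN, hscard]
      omega
    rw [← hvard, ← h _ hdig, hcardU, hexp]
  rw [Finset.sum_congr rfl hterm]
  -- evaluate the sum
  have : ∀ t ∈ s.powerset, pa ^ (T.card + t.card) * (1 - pa) ^ (s.card - t.card)
      = pa ^ T.card * ((∏ _p ∈ t, pa) * ∏ _p ∈ s \ t, (1 - pa)) := by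
    intro t ht
    rw [Finset.mem_powerset] at ht
    rw [Finset.prod_const, Finset.prod_const, Finset.card_sdiff_of_subset ht, pow_add]
    ring
  rw [Finset.sum_congr rfl this, ← Finset.mul_sum,
    ← Finset.prod_add (fun _ : Fin n × Fin n => pa) (fun _ => 1 - pa) s]
  simp

end M2
section M3
variable {Ω : Type*} [MeasurableSpace Ω] {μ : Measure Ω} [IsProbabilityMeasure μ]
  {n : ℕ} {φ : Ω → Ω → ℝ} {pa : ℝ}

lemma momentPsi (hmeas : Measurable (Function.uncurry φ))
    (h01 : ∀ x y, φ x y = 0 ∨ φ x y = 1)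
    (h : ∀ A : Finset (Fin n × Fin n), IsDigraph A →
        pa ^ A.card * (1 - pa) ^ (n * (n - 1) - A.card) = vardP μ φ A)
    (T : Finset (Fin n × Fin n)) (hTne : T.Nonempty)
    (hT : T ⊆ Finset.univ.filter (fun p : Fin n × Fin n => p.1 ≠ p.2)) :
    ∫ x : Fin n → Ω, ∏ p ∈ T, (φ (x p.1) (x p.2) - pa)
      ∂(Measure.pi fun _ : Fin n => μ) = 0 := by
  classical
  have hpt : ∀ x : Fin n → Ω, ∏ p ∈ T, (φ (x p.1) (x p.2) - pa)
      = ∑ U ∈ T.powerset, (∏ p ∈ U, φ (x p.1) (x p.2)) * (-pa) ^ (T \ U).card := by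
    intro x
    have h1 : ∀ p ∈ T, φ (x p.1) (x p.2) - pa = φ (x p.1) (x p.2) + (-pa) := fun p _ => by ring
    rw [Finset.prod_congr rfl h1, Finset.prod_add]
    exact Finset.sum_congr rfl (fun U _ => by rw [Finset.prod_const])
  rw [integral_congr_ae (ae_of_all _ hpt)]
  have hint : ∀ U ∈ T.powerset, Integrable
      (fun x : Fin n → Ω => (∏ p ∈ U, φ (x p.1) (x p.2)) * (-pa) ^ (T \ U).card)
      (Measure.pi fun _ : Fin n => μ) := by
    intro U _
    have := (integrable_arcprod (μ := μ) hmeas h01 U (∅ : Finset (Fin n × Fin n)))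
    simpa using this.mul_const ((-pa) ^ (T \ U).card)
  rw [integral_finset_sum _ hint]
  have hterm : ∀ U ∈ T.powerset,
      (∫ x : Fin n → Ω, (∏ p ∈ U, φ (x p.1) (x p.2)) * (-pa) ^ (T \ U).card
        ∂(Measure.pi fun _ : Fin n => μ))
      = (∏ _p ∈ U, pa) * ∏ _p ∈ T \ U, (-pa) := by
    intro U hU
    rw [Finset.mem_powerset] at hU
    rw [integral_mul_const, momentA hmeas h01 h U (hU.trans hT),
      Finset.prod_const, Finset.prod_const]
  rw [Finset.sum_congr rfl hterm,
    ← Finset.prod_add (fun _ : Fin n × Fin n => pa) (fun _ => -pa) T]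
  have : ∀ p ∈ T, pa + -pa = (0 : ℝ) := fun p _ => by ring
  rw [Finset.prod_congr rfl this, Finset.prod_const]
  exact zero_pow (by simpa [Finset.card_eq_zero] using fun hc => hTne.ne_empty hc)

end M3
section Bridge
open MeasurableSpace Set
variable {Ω : Type*} [MeasurableSpace Ω] (μ : Measure Ω) [IsProbabilityMeasure μ] {n : ℕ}

lemma map_pi_four (a b c d : Fin n) (hab : a ≠ b) (hac : a ≠ c) (had : a ≠ d)
    (hbc : b ≠ c) (hbd : b ≠ d) (hcd : c ≠ d) :
    (Measure.pi fun _ : Fin n => μ).map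
        (fun x : Fin n → Ω => ((x a, x b), (x c, x d)))
      = (μ.prod μ).prod (μ.prod μ) := by
  classical
  have hπ : Measurable (fun x : Fin n → Ω => ((x a, x b), (x c, x d))) :=
    (((measurable_pi_apply a).prodMk (measurable_pi_apply b)).prodMk
      ((measurable_pi_apply c).prodMk (measurable_pi_apply d)))
  set R : Set (Set (Ω × Ω)) :=
    Set.image2 (· ×ˢ ·) { s : Set Ω | MeasurableSet s } { t : Set Ω | MeasurableSet t } with hR
  have hRspan : IsCountablySpanning R := by
    refine ⟨fun _ => Set.univ ×ˢ Set.univ, fun _ =>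
      Set.mem_image2_of_mem MeasurableSet.univ MeasurableSet.univ, by simp [Set.iUnion_const]⟩
  have hgen : MeasurableSpace.generateFrom (Set.image2 (· ×ˢ ·) R R)
      = Prod.instMeasurableSpace :=
    generateFrom_eq_prod generateFrom_prod generateFrom_prod hRspan hRspan
  have hpi : IsPiSystem (Set.image2 (· ×ˢ ·) R R) :=
    isPiSystem_prod.prod isPiSystem_prod
  haveI : IsProbabilityMeasure ((Measure.pi fun _ : Fin n => μ).map
      (fun x : Fin n → Ω => ((x a, x b), (x c, x d)))) :=
    Measure.isProbabilityMeasure_map hπ.aemeasurable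
  refine (MeasureTheory.ext_of_generate_finite _ hgen.symm hpi ?_ (by simp)).symm
  rintro _ ⟨_, ⟨A, hA, B, hB, rfl⟩, _, ⟨C, hC, D, hD, rfl⟩, rfl⟩
  rw [Measure.map_apply hπ (((hA.prod hB)).prod (hC.prod hD)),
    Measure.prod_prod, Measure.prod_prod, Measure.prod_prod]
  have hpre : (fun x : Fin n → Ω => ((x a, x b), (x c, x d))) ⁻¹'
      ((A ×ˢ B) ×ˢ (C ×ˢ D))
      = Set.pi Set.univ (fun j : Fin n =>
          if j = a then A else if j = b then B else if j = c then C
            else if j = d then D else Set.univ) := by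
    ext x
    simp only [Set.mem_preimage, Set.mem_prod, Set.mem_pi, Set.mem_univ, true_implies]
    constructor
    · rintro ⟨⟨h1, h2⟩, h3, h4⟩ j
      split_ifs with e1 e2 e3 e4
      · exact e1 ▸ h1
      · exact e2 ▸ h2
      · exact e3 ▸ h3
      · exact e4 ▸ h4
      · trivial
    · intro H
      refine ⟨⟨?_, ?_⟩, ?_, ?_⟩
      · have := H a; simpa using this
      · have := H b; simp only [if_neg (Ne.symm hab).symm] at this
        simpa [if_neg hab.symm, if_pos rfl] using this
      · have := H c
        simpa [if_neg hac.symm, if_neg hbc.symm, if_pos rfl] using this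
      · have := H d
        simpa [if_neg had.symm, if_neg hbd.symm, if_neg hcd.symm, if_pos rfl] using this
  rw [hpre, MeasureTheory.Measure.pi_pi]
  have hsub : ({a, b, c, d} : Finset (Fin n)) ⊆ Finset.univ := Finset.subset_univ _
  rw [← Finset.prod_subset hsub (fun j _ hj => by
    have hja : j ≠ a := by rintro rfl; simp at hj
    have hjb : j ≠ b := by rintro rfl; simp at hj
    have hjc : j ≠ c := by rintro rfl; simp at hj
    have hjd : j ≠ d := by rintro rfl; simp at hj
    simp [hja, hjb, hjc, hjd])]
  have h1 : a ∉ ({b, c, d} : Finset (Fin n)) := by simp [hab, hac, had]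
  have h2 : b ∉ ({c, d} : Finset (Fin n)) := by simp [hbc, hbd]
  have h3 : c ∉ ({d} : Finset (Fin n)) := by simp [hcd]
  rw [show ({a, b, c, d} : Finset (Fin n)) = insert a {b, c, d} from rfl,
    Finset.prod_insert h1, Finset.prod_insert h2, Finset.prod_insert h3,
    Finset.prod_singleton]
  rw [if_pos rfl]
  rw [if_neg hab.symm, if_pos rfl]
  rw [if_neg hac.symm, if_neg hbc.symm, if_pos rfl]
  rw [if_neg had.symm, if_neg hbd.symm, if_neg hcd.symm, if_pos rfl]
  ring

end Bridge
section KZero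
variable {Ω : Type*} [MeasurableSpace Ω] {μ : Measure Ω} [IsProbabilityMeasure μ]
  {φ : Ω → Ω → ℝ} {pa : ℝ}

lemma psi_abs_le (h01 : ∀ x y, φ x y = 0 ∨ φ x y = 1) (hpa0 : 0 < pa) (hpa1 : pa < 1)
    (u v : Ω) : |φ u v - pa| ≤ 1 := by
  rcases h01 u v with h | h <;> rw [h] <;> rw [abs_le] <;> constructor <;> linarith

lemma meas_psi2 (hmeas : Measurable (Function.uncurry φ)) :
    Measurable fun r : (Ω × Ω) × Ω => (φ r.2 r.1.1 - pa) * (φ r.2 r.1.2 - pa) := by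
  have m1 : Measurable fun r : (Ω × Ω) × Ω => φ r.2 r.1.1 := by
    have : (fun r : (Ω × Ω) × Ω => φ r.2 r.1.1)
        = Function.uncurry φ ∘ (fun r => (r.2, r.1.1)) := rfl
    rw [this]
    exact hmeas.comp (measurable_snd.prodMk (measurable_fst.comp measurable_fst))
  have m2 : Measurable fun r : (Ω × Ω) × Ω => φ r.2 r.1.2 := by
    have : (fun r : (Ω × Ω) × Ω => φ r.2 r.1.2)
        = Function.uncurry φ ∘ (fun r => (r.2, r.1.2)) := rfl
    rw [this]
    exact hmeas.comp (measurable_snd.prodMk (measurable_snd.comp measurable_fst))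
  exact (m1.sub measurable_const).mul (m2.sub measurable_const)

lemma meas_K (hmeas : Measurable (Function.uncurry φ)) :
    StronglyMeasurable fun q : Ω × Ω =>
      ∫ t, (φ t q.1 - pa) * (φ t q.2 - pa) ∂μ := by
  exact (meas_psi2 (pa := pa) hmeas).stronglyMeasurable.integral_prod_right'

lemma K_zero {n : ℕ} (hmeas : Measurable (Function.uncurry φ))
    (h01 : ∀ x y, φ x y = 0 ∨ φ x y = 1) (hpa0 : 0 < pa) (hpa1 : pa < 1)
    (a b c d : Fin n) (hab : a ≠ b) (hac : a ≠ c) (had : a ≠ d)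
    (hbc : b ≠ c) (hbd : b ≠ d) (hcd : c ≠ d)
    (hE4 : ∫ x : Fin n → Ω,
        ((φ (x c) (x a) - pa) * (φ (x c) (x b) - pa)) *
          ((φ (x d) (x a) - pa) * (φ (x d) (x b) - pa))
        ∂(Measure.pi fun _ : Fin n => μ) = 0) :
    (fun q : Ω × Ω => ∫ t, (φ t q.1 - pa) * (φ t q.2 - pa) ∂μ) =ᵐ[μ.prod μ] 0 := by
  classical
  set ψ : Ω → Ω → ℝ := fun u v => φ u v - pa with hψ
  set K : Ω × Ω → ℝ := fun q => ∫ t, ψ t q.1 * ψ t q.2 ∂μ with hK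
  have hψle : ∀ u v, |ψ u v| ≤ 1 := psi_abs_le h01 hpa0 hpa1
  set H : (Ω × Ω) × (Ω × Ω) → ℝ := fun q =>
    (ψ q.2.1 q.1.1 * ψ q.2.1 q.1.2) * (ψ q.2.2 q.1.1 * ψ q.2.2 q.1.2) with hH
  have hπ : Measurable (fun x : Fin n → Ω => ((x a, x b), (x c, x d))) :=
    (((measurable_pi_apply a).prodMk (measurable_pi_apply b)).prodMk
      ((measurable_pi_apply c).prodMk (measurable_pi_apply d)))
  have hHmeas : Measurable H := by
    have m1 : Measurable fun q : (Ω × Ω) × (Ω × Ω) => ψ q.2.1 q.1.1 * ψ q.2.1 q.1.2 := by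
      have : (fun q : (Ω × Ω) × (Ω × Ω) => ψ q.2.1 q.1.1 * ψ q.2.1 q.1.2)
          = (fun r : (Ω × Ω) × Ω => ψ r.2 r.1.1 * ψ r.2 r.1.2) ∘
              (fun q => (q.1, q.2.1)) := rfl
      rw [this]
      exact (meas_psi2 hmeas).comp (measurable_fst.prodMk (measurable_fst.comp measurable_snd))
    have m2 : Measurable fun q : (Ω × Ω) × (Ω × Ω) => ψ q.2.2 q.1.1 * ψ q.2.2 q.1.2 := by
      have : (fun q : (Ω × Ω) × (Ω × Ω) => ψ q.2.2 q.1.1 * ψ q.2.2 q.1.2)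
          = (fun r : (Ω × Ω) × Ω => ψ r.2 r.1.1 * ψ r.2 r.1.2) ∘
              (fun q => (q.1, q.2.2)) := rfl
      rw [this]
      exact (meas_psi2 hmeas).comp (measurable_fst.prodMk (measurable_snd.comp measurable_snd))
    exact m1.mul m2
  have habs_mul : ∀ x y : ℝ, |x| ≤ 1 → |y| ≤ 1 → |x * y| ≤ 1 := by
    intro x y hx hy
    rw [abs_mul]
    exact mul_le_one₀ hx (abs_nonneg _) hy
  have hHbd : ∀ q, ‖H q‖ ≤ 1 := by
    intro q
    rw [hH, Real.norm_eq_abs]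
    exact habs_mul _ _ (habs_mul _ _ (hψle _ _) (hψle _ _))
      (habs_mul _ _ (hψle _ _) (hψle _ _))
  have hHint : Integrable H ((μ.prod μ).prod (μ.prod μ)) :=
    (integrable_const (1 : ℝ)).mono' hHmeas.aestronglyMeasurable (ae_of_all _ hHbd)
  have hmap := map_pi_four μ a b c d hab hac had hbc hbd hcd
  have hE4' : ∫ q, H q ∂((μ.prod μ).prod (μ.prod μ)) = 0 := by
    rw [← hmap, integral_map hπ.aemeasurable
      (by rw [hmap]; exact hHmeas.aestronglyMeasurable)]
    exact hE4
  have hinner : ∀ p1 : Ω × Ω, ∫ p2, H (p1, p2) ∂(μ.prod μ) = K p1 ^ 2 := by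
    intro p1
    have : ∫ p2 : Ω × Ω, (ψ p2.1 p1.1 * ψ p2.1 p1.2) * (ψ p2.2 p1.1 * ψ p2.2 p1.2)
        ∂(μ.prod μ)
        = (∫ t, ψ t p1.1 * ψ t p1.2 ∂μ) * ∫ s, ψ s p1.1 * ψ s p1.2 ∂μ :=
      integral_prod_mul (μ := μ) (ν := μ)
        (fun t => ψ t p1.1 * ψ t p1.2) (fun s => ψ s p1.1 * ψ s p1.2)
    rw [hH]
    simpa [pow_two] using this
  have hKsq : ∫ p1, K p1 ^ 2 ∂(μ.prod μ) = 0 := by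
    have h2 : ∫ p1, K p1 ^ 2 ∂(μ.prod μ) = ∫ q, H q ∂((μ.prod μ).prod (μ.prod μ)) := by
      rw [MeasureTheory.integral_prod _ hHint]
      exact integral_congr_ae (ae_of_all _ (fun p1 => (hinner p1).symm))
    rw [h2, hE4']
  have hKbd : ∀ p, ‖K p ^ 2‖ ≤ 1 := by
    intro p
    have h1 : ‖K p‖ ≤ 1 * (μ Set.univ).toReal := by
      refine norm_integral_le_of_norm_le_const (ae_of_all _ (fun t => ?_))
      rw [Real.norm_eq_abs, abs_mul]
      exact mul_le_one₀ (hψle _ _) (abs_nonneg _) (hψle _ _)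
    rw [measure_univ] at h1
    simp only [ENNReal.toReal_one, mul_one] at h1
    rw [Real.norm_eq_abs] at h1 ⊢
    rw [abs_pow]
    calc |K p| ^ 2 ≤ 1 ^ 2 := by
          have : (0:ℝ) ≤ |K p| := abs_nonneg _
          exact pow_le_pow_left₀ this h1 2
      _ = 1 := one_pow 2
  have hKmeas : StronglyMeasurable K := meas_K hmeas
  have hKint : Integrable (fun p => K p ^ 2) (μ.prod μ) := by
    have hm2 : StronglyMeasurable (fun p => K p ^ 2) := by
      have : (fun p => K p ^ 2) = fun p => K p * K p := by
        funext p; rw [pow_two]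
      rw [this]
      exact hKmeas.mul hKmeas
    exact (integrable_const (1 : ℝ)).mono' hm2.aestronglyMeasurable (ae_of_all _ hKbd)
  have hsq0 : (fun p => K p ^ 2) =ᵐ[μ.prod μ] 0 :=
    (integral_eq_zero_iff_of_nonneg (fun p => sq_nonneg _) hKint).1 hKsq
  filter_upwards [hsq0] with p hp
  have h0 : K p ^ 2 = 0 := hp
  exact pow_eq_zero_iff two_ne_zero |>.mp h0


end KZero
section GB
variable {Ω : Type*} [MeasurableSpace Ω] {μ : Measure Ω} [IsProbabilityMeasure μ]
  {φ : Ω → Ω → ℝ} {pa : ℝ}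

lemma GB_zero (hmeas : Measurable (Function.uncurry φ))
    (h01 : ∀ x y, φ x y = 0 ∨ φ x y = 1) (hpa0 : 0 < pa) (hpa1 : pa < 1)
    (hK0 : (fun q : Ω × Ω => ∫ t, (φ t q.1 - pa) * (φ t q.2 - pa) ∂μ) =ᵐ[μ.prod μ] 0)
    {B : Set Ω} (hB : MeasurableSet B) :
    (fun x => ∫ z in B, (φ x z - pa) ∂μ) =ᵐ[μ] 0 := by
  classical
  set ψ : Ω → Ω → ℝ := fun u v => φ u v - pa with hψ
  have hψle : ∀ u v, |ψ u v| ≤ 1 := psi_abs_le h01 hpa0 hpa1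
  have habs_mul : ∀ x y : ℝ, |x| ≤ 1 → |y| ≤ 1 → |x * y| ≤ 1 := by
    intro x y hx hy
    rw [abs_mul]
    exact mul_le_one₀ hx (abs_nonneg _) hy
  set χ : Ω → ℝ := B.indicator (fun _ => (1 : ℝ)) with hχ
  have hχm : Measurable χ := measurable_const.indicator hB
  have hχle : ∀ z, |χ z| ≤ 1 := by
    intro z
    rw [hχ, Set.indicator_apply]
    split_ifs <;> simp
  have hψm : Measurable (Function.uncurry ψ) := hmeas.sub measurable_const
  set G : Ω → ℝ := fun x => ∫ z, ψ x z * χ z ∂μ with hG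
  have hGeq : ∀ x, (∫ z in B, ψ x z ∂μ) = G x := by
    intro x
    rw [hG, ← integral_indicator hB]
    congr 1
    funext z
    rw [Set.indicator_apply, hχ, Set.indicator_apply]
    split_ifs <;> simp
  -- measurability of G
  have hFm : Measurable (fun r : Ω × Ω => ψ r.1 r.2 * χ r.2) :=
    hψm.mul (hχm.comp measurable_snd)
  have hGm : StronglyMeasurable G := hFm.stronglyMeasurable.integral_prod_right'
  have hGle : ∀ x, ‖G x‖ ≤ 1 := by
    intro x
    have h1 : ‖G x‖ ≤ 1 * (μ Set.univ).toReal := by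
      refine norm_integral_le_of_norm_le_const (ae_of_all _ (fun z => ?_))
      rw [Real.norm_eq_abs]
      exact habs_mul _ _ (hψle _ _) (hχle _)
    simpa using h1
  -- ∫ G^2 = 0
  have hg : ∀ x, G x ^ 2 = ∫ p : Ω × Ω, (ψ x p.1 * χ p.1) * (ψ x p.2 * χ p.2) ∂(μ.prod μ) := by
    intro x
    rw [integral_prod_mul (μ := μ) (ν := μ) (fun z => ψ x z * χ z) (fun w => ψ x w * χ w)]
    rw [pow_two, hG]
  have hfmeas : Measurable (fun r : Ω × (Ω × Ω) =>
      (ψ r.1 r.2.1 * χ r.2.1) * (ψ r.1 r.2.2 * χ r.2.2)) := by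
    have m1 : Measurable (fun r : Ω × (Ω × Ω) => ψ r.1 r.2.1) := by
      have : (fun r : Ω × (Ω × Ω) => ψ r.1 r.2.1)
          = Function.uncurry ψ ∘ (fun r => (r.1, r.2.1)) := rfl
      rw [this]
      exact hψm.comp (measurable_fst.prodMk (measurable_fst.comp measurable_snd))
    have m2 : Measurable (fun r : Ω × (Ω × Ω) => ψ r.1 r.2.2) := by
      have : (fun r : Ω × (Ω × Ω) => ψ r.1 r.2.2)
          = Function.uncurry ψ ∘ (fun r => (r.1, r.2.2)) := rfl
      rw [this]
      exact hψm.comp (measurable_fst.prodMk (measurable_snd.comp measurable_snd))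
    exact (m1.mul ((hχm.comp (measurable_fst.comp measurable_snd)))).mul
      (m2.mul ((hχm.comp (measurable_snd.comp measurable_snd))))
  have hfint : Integrable (Function.uncurry (fun x (p : Ω × Ω) =>
      (ψ x p.1 * χ p.1) * (ψ x p.2 * χ p.2))) (μ.prod (μ.prod μ)) := by
    refine (integrable_const (1 : ℝ)).mono' hfmeas.aestronglyMeasurable (ae_of_all _ ?_)
    rintro ⟨x, p⟩
    rw [Function.uncurry, Real.norm_eq_abs]
    exact habs_mul _ _ (habs_mul _ _ (hψle _ _) (hχle _)) (habs_mul _ _ (hψle _ _) (hχle _))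
  have hswap := MeasureTheory.integral_integral_swap
    (f := fun x (p : Ω × Ω) => (ψ x p.1 * χ p.1) * (ψ x p.2 * χ p.2)) hfint
  have hGsq : ∫ x, G x ^ 2 ∂μ = 0 := by
    rw [integral_congr_ae (ae_of_all _ hg), hswap]
    have hinner : ∀ p : Ω × Ω, (∫ x, (ψ x p.1 * χ p.1) * (ψ x p.2 * χ p.2) ∂μ)
        = (χ p.1 * χ p.2) * ∫ t, ψ t p.1 * ψ t p.2 ∂μ := by
      intro p
      rw [← integral_const_mul]
      congr 1
      funext x
      ring
    rw [integral_congr_ae (ae_of_all _ hinner)]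
    have : (fun p : Ω × Ω => (χ p.1 * χ p.2) * ∫ t, ψ t p.1 * ψ t p.2 ∂μ)
        =ᵐ[μ.prod μ] 0 := by
      filter_upwards [hK0] with p hp
      simp only [hψ] at hp ⊢
      rw [hp]
      simp
    rw [integral_congr_ae this]
    simp
  have hGint : Integrable (fun x => G x ^ 2) μ := by
    have hm2 : StronglyMeasurable (fun x => G x ^ 2) := by
      have : (fun x => G x ^ 2) = fun x => G x * G x := by funext x; rw [pow_two]
      rw [this]
      exact hGm.mul hGm
    refine (integrable_const (1 : ℝ)).mono' hm2.aestronglyMeasurable (ae_of_all _ ?_)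
    intro x
    rw [Real.norm_eq_abs, abs_pow]
    calc |G x| ^ 2 ≤ 1 ^ 2 := by
          have := hGle x
          rw [Real.norm_eq_abs] at this
          exact pow_le_pow_left₀ (abs_nonneg _) this 2
      _ = 1 := one_pow 2
  have hsq0 : (fun x => G x ^ 2) =ᵐ[μ] 0 :=
    (integral_eq_zero_iff_of_nonneg (fun x => sq_nonneg _) hGint).1 hGsq
  filter_upwards [hsq0] with x hx
  have h0 : G x ^ 2 = 0 := hx
  have : G x = 0 := pow_eq_zero_iff two_ne_zero |>.mp h0
  rw [← hGeq x] at this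
  exact this

end GB
section Sides
open MeasurableSpace

lemma exists_sides {Ω : Type*} [MeasurableSpace Ω] {S : Set (Ω × Ω)} (hS : MeasurableSet S) :
    ∃ f : ℕ → Set Ω, (∀ i, MeasurableSet (f i)) ∧ Set.univ ∈ Set.range f ∧
      MeasurableSet[@Prod.instMeasurableSpace Ω Ω
          (generateFrom (Set.range (fun F : Finset ℕ => ⋂ i ∈ F, f i)))
          (generateFrom (Set.range (fun F : Finset ℕ => ⋂ i ∈ F, f i)))] S := by
  classical
  have hS' : MeasurableSet[generateFrom
      (Set.image2 (· ×ˢ ·) { s : Set Ω | MeasurableSet s } { t : Set Ω | MeasurableSet t })] S := by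
    rw [generateFrom_prod]
    exact hS
  obtain ⟨T, hTsub, hTc, hTmem⟩ := exists_countable_generateFrom hS'
  set sides : Set (Set Ω) :=
    insert Set.univ (((fun r : Set (Ω × Ω) => Prod.fst '' r) '' T) ∪
      ((fun r : Set (Ω × Ω) => Prod.snd '' r) '' T)) with hsides
  have hsidesc : sides.Countable :=
    (Set.Countable.union (hTc.image _) (hTc.image _)).insert _
  have hsidesm : ∀ A ∈ sides, MeasurableSet A := by
    rintro A hA
    rcases hA with rfl | hA
    · exact MeasurableSet.univ
    have key : ∀ r ∈ T, MeasurableSet (Prod.fst '' r) ∧ MeasurableSet (Prod.snd '' r) := by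
      intro r hr
      obtain ⟨A', hA', B', hB', rfl⟩ := hTsub hr
      rcases Set.eq_empty_or_nonempty B' with rfl | hB'ne
      · simp
      rcases Set.eq_empty_or_nonempty A' with rfl | hA'ne
      · simp
      rw [Set.fst_image_prod _ hB'ne, Set.snd_image_prod hA'ne _]
      exact ⟨hA', hB'⟩
    rcases hA with ⟨r, hr, rfl⟩ | ⟨r, hr, rfl⟩
    · exact (key r hr).1
    · exact (key r hr).2
  obtain ⟨f, hf⟩ := hsidesc.exists_eq_range ⟨Set.univ, Set.mem_insert _ _⟩
  refine ⟨f, ?_, ?_, ?_⟩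
  · intro i
    exact hsidesm (f i) (hf ▸ Set.mem_range_self i)
  · rw [← hf]; exact Set.mem_insert _ _
  · set 𝒜₀ := Set.range (fun F : Finset ℕ => ⋂ i ∈ F, f i) with h𝒜₀
    set 𝒞 := generateFrom 𝒜₀ with h𝒞
    have hmem : ∀ A ∈ sides, MeasurableSet[generateFrom 𝒜₀] A := by
      intro A hA
      have : A ∈ Set.range f := hf ▸ hA
      obtain ⟨i, rfl⟩ := this
      refine measurableSet_generateFrom ⟨({i} : Finset ℕ), ?_⟩
      simp
    have hle : generateFrom T ≤ @Prod.instMeasurableSpace Ω Ω 𝒞 𝒞 := by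
      refine generateFrom_le ?_
      intro r hr
      rcases Set.eq_empty_or_nonempty r with rfl | hrne
      · exact @MeasurableSet.empty _ (@Prod.instMeasurableSpace Ω Ω 𝒞 𝒞)
      obtain ⟨A', hA', B', hB', rfl⟩ := hTsub hr
      have hA'ne : A'.Nonempty := (Set.prod_nonempty_iff.mp hrne).1
      have hB'ne : B'.Nonempty := (Set.prod_nonempty_iff.mp hrne).2
      have h1 : MeasurableSet[generateFrom 𝒜₀] A' := by
        refine hmem A' ?_
        rw [hsides]
        refine Set.mem_insert_iff.mpr (Or.inr (Set.mem_union_left _ ?_))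
        exact ⟨A' ×ˢ B', hr, Set.fst_image_prod _ hB'ne⟩
      have h2 : MeasurableSet[generateFrom 𝒜₀] B' := by
        refine hmem B' ?_
        rw [hsides]
        refine Set.mem_insert_iff.mpr (Or.inr (Set.mem_union_right _ ?_))
        exact ⟨A' ×ˢ B', hr, Set.snd_image_prod hA'ne _⟩
      exact @MeasurableSet.prod Ω Ω 𝒞 𝒞 A' B' h1 h2
    exact hle S hTmem

end Sides
set_option maxHeartbeats 2000000 in
open MeasurableSpace in
/-- For `n ≥ 4` and `0 < p_a < 1`, the arc random digraph `D(n, p_a)` is not a vertex random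
digraph: no probability space `(Ω, μ)` and `{0,1}`-valued measurable `φ` represent it. -/
theorem stmt3 {n : ℕ} (hn : 4 ≤ n) {pa : ℝ} (hpa0 : 0 < pa) (hpa1 : pa < 1)
    (Ω : Type*) [MeasurableSpace Ω] (μ : Measure Ω) [IsProbabilityMeasure μ]
    (φ : Ω → Ω → ℝ) (hmeas : Measurable (Function.uncurry φ))
    (h01 : ∀ x y, φ x y = 0 ∨ φ x y = 1) :
    ¬ ∀ A : Finset (Fin n × Fin n), IsDigraph A →
        pa ^ A.card * (1 - pa) ^ (n * (n - 1) - A.card) = vardP μ φ A := by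
  intro h
  classical
  -- four distinct vertices
  set a : Fin n := ⟨0, by omega⟩ with ha
  set b : Fin n := ⟨1, by omega⟩ with hb
  set c : Fin n := ⟨2, by omega⟩ with hc
  set d : Fin n := ⟨3, by omega⟩ with hd
  have hab : a ≠ b := by simp [ha, hb, Fin.ext_iff]
  have hac : a ≠ c := by simp [ha, hc, Fin.ext_iff]
  have had : a ≠ d := by simp [ha, hd, Fin.ext_iff]
  have hbc : b ≠ c := by simp [hb, hc, Fin.ext_iff]
  have hbd : b ≠ d := by simp [hb, hd, Fin.ext_iff]
  have hcd : c ≠ d := by simp [hc, hd, Fin.ext_iff]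
  -- the four arcs
  set T4 : Finset (Fin n × Fin n) := {(c, a), (c, b), (d, a), (d, b)} with hT4
  have hT4ne : T4.Nonempty := ⟨(c, a), by simp [hT4]⟩
  have hT4sub : T4 ⊆ Finset.univ.filter (fun p : Fin n × Fin n => p.1 ≠ p.2) := by
    intro p hp
    rw [hT4] at hp
    simp only [Finset.mem_insert, Finset.mem_singleton] at hp
    rcases hp with rfl | rfl | rfl | rfl <;>
      simp [Finset.mem_filter, hac.symm, hbc.symm, had.symm, hbd.symm]
  have hE40 := momentPsi (μ := μ) hmeas h01 h T4 hT4ne hT4sub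
  have hmem1 : (c, a) ∉ ({(c, b), (d, a), (d, b)} : Finset (Fin n × Fin n)) := by
    simp [Prod.ext_iff, hab, hcd]
  have hmem2 : (c, b) ∉ ({(d, a), (d, b)} : Finset (Fin n × Fin n)) := by
    simp [Prod.ext_iff, hcd]
  have hmem3 : (d, a) ∉ ({(d, b)} : Finset (Fin n × Fin n)) := by
    simp [Prod.ext_iff, hab]
  have hprodeq : ∀ x : Fin n → Ω,
      (∏ p ∈ T4, (φ (x p.1) (x p.2) - pa))
      = ((φ (x c) (x a) - pa) * (φ (x c) (x b) - pa)) *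
          ((φ (x d) (x a) - pa) * (φ (x d) (x b) - pa)) := by
    intro x
    rw [hT4, show ({(c, a), (c, b), (d, a), (d, b)} : Finset (Fin n × Fin n))
        = insert (c, a) {(c, b), (d, a), (d, b)} from rfl,
      Finset.prod_insert hmem1,
      show ({(c, b), (d, a), (d, b)} : Finset (Fin n × Fin n))
        = insert (c, b) {(d, a), (d, b)} from rfl,
      Finset.prod_insert hmem2,
      show ({(d, a), (d, b)} : Finset (Fin n × Fin n))
        = insert (d, a) {(d, b)} from rfl,
      Finset.prod_insert hmem3, Finset.prod_singleton]
    ring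
  have hE4 : ∫ x : Fin n → Ω,
      ((φ (x c) (x a) - pa) * (φ (x c) (x b) - pa)) *
        ((φ (x d) (x a) - pa) * (φ (x d) (x b) - pa))
      ∂(Measure.pi fun _ : Fin n => μ) = 0 := by
    rw [← integral_congr_ae (ae_of_all _ hprodeq)]
    exact hE40
  have hK0 := K_zero hmeas h01 hpa0 hpa1 a b c d hab hac had hbc hbd hcd hE4
  -- the graph of φ
  set S : Set (Ω × Ω) := Function.uncurry φ ⁻¹' {1} with hSdef
  have hS : MeasurableSet S := hmeas (measurableSet_singleton 1)
  obtain ⟨f, hfm, hfuniv, hSmem⟩ := exists_sides hS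
  set 𝒜₀ : Set (Set Ω) := Set.range (fun F : Finset ℕ => ⋂ i ∈ F, f i) with h𝒜₀
  have h𝒜₀count : 𝒜₀.Countable := Set.countable_range _
  have h𝒜₀meas : ∀ B ∈ 𝒜₀, MeasurableSet B := by
    rintro _ ⟨F, rfl⟩
    exact MeasurableSet.biInter (Finset.countable_toSet F) (fun i _ => hfm i)
  have huniv𝒜₀ : Set.univ ∈ 𝒜₀ := ⟨(∅ : Finset ℕ), by simp⟩
  have hpisys : IsPiSystem 𝒜₀ := by
    rintro _ ⟨F, rfl⟩ _ ⟨G, rfl⟩ -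
    refine ⟨F ∪ G, ?_⟩
    ext z
    simp [Finset.mem_union, or_imp, forall_and]
  have h𝒞le : generateFrom 𝒜₀ ≤ (inferInstance : MeasurableSpace Ω) := generateFrom_le h𝒜₀meas
  -- almost every x₀ works for every B in the countable π-system
  have hae : ∀ᵐ x ∂μ, ∀ B ∈ 𝒜₀, (∫ z in B, (φ x z - pa) ∂μ) = 0 :=
    (ae_ball_iff h𝒜₀count).2
      (fun B hB => GB_zero hmeas h01 hpa0 hpa1 hK0 (h𝒜₀meas B hB))
  haveI : (ae μ).NeBot := ae_neBot.2 (IsProbabilityMeasure.ne_zero μ)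
  obtain ⟨x₀, hx₀⟩ := hae.exists
  -- integrability of the section
  have hsecm : Measurable (fun z => φ x₀ z - pa) := by
    have : (fun z => φ x₀ z) = Function.uncurry φ ∘ (Prod.mk x₀) := rfl
    exact (this ▸ hmeas.comp measurable_prodMk_left).sub measurable_const
  have hsecint : Integrable (fun z => φ x₀ z - pa) μ := by
    refine (integrable_const (1 : ℝ)).mono' hsecm.aestronglyMeasurable (ae_of_all _ ?_)
    intro z
    rw [Real.norm_eq_abs]
    exact psi_abs_le h01 hpa0 hpa1 x₀ z
  have huniv0 : ∫ z, (φ x₀ z - pa) ∂μ = 0 := by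
    rw [← setIntegral_univ]
    exact hx₀ Set.univ huniv𝒜₀
  -- Dynkin: the set integral vanishes on every 𝒞-measurable set
  have hall : ∀ t : Set Ω, MeasurableSet[generateFrom 𝒜₀] t → (∫ z in t, (φ x₀ z - pa) ∂μ) = 0 := by
    intro t ht
    refine MeasurableSpace.induction_on_inter (m := generateFrom 𝒜₀)
      (C := fun t _ => (∫ z in t, (φ x₀ z - pa) ∂μ) = 0) rfl hpisys ?_ ?_ ?_ ?_ t ht
    · simp
    · exact fun B hB => hx₀ B hB
    · intro u hu hCu
      have hu' : MeasurableSet u := h𝒞le u hu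
      have := integral_add_compl hu' hsecint
      rw [huniv0] at this
      linarith [this, hCu]
    · intro g hdisj hgm hCg
      have hgm' : ∀ i, MeasurableSet (g i) := fun i => h𝒞le _ (hgm i)
      rw [integral_iUnion hgm' hdisj hsecint.integrableOn]
      simp [hCg]
  -- the section of S at x₀
  set N : Set Ω := Prod.mk x₀ ⁻¹' S with hNdef
  have hN𝒞 : MeasurableSet[generateFrom 𝒜₀] N := by
    have hmk : @Measurable Ω (Ω × Ω) (generateFrom 𝒜₀)
        (@Prod.instMeasurableSpace Ω Ω (generateFrom 𝒜₀) (generateFrom 𝒜₀)) (Prod.mk x₀) := by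
      letI : MeasurableSpace Ω := generateFrom 𝒜₀
      exact measurable_prodMk_left
    exact hmk hSmem
  have hNmeas : MeasurableSet N := h𝒞le N hN𝒞
  have hNind : ∀ z, φ x₀ z = N.indicator (fun _ => (1 : ℝ)) z := by
    intro z
    rcases h01 x₀ z with h0 | h1
    · have hzN : z ∉ N := by
        rw [hNdef, Set.mem_preimage, hSdef, Set.mem_preimage]
        simp only [Set.mem_singleton_iff]
        rw [show Function.uncurry φ (x₀, z) = φ x₀ z from rfl, h0]
        norm_num
      rw [Set.indicator_of_notMem hzN, h0]
    · have hzN : z ∈ N := by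
        rw [hNdef, Set.mem_preimage, hSdef, Set.mem_preimage]
        simp only [Set.mem_singleton_iff]
        rw [show Function.uncurry φ (x₀, z) = φ x₀ z from rfl, h1]
      rw [Set.indicator_of_mem hzN, h1]
  -- compute the two integrals
  set m : ℝ := (μ N).toReal with hm
  have hphix : ∫ z, φ x₀ z ∂μ = m := by
    rw [integral_congr_ae (ae_of_all _ hNind), integral_indicator_const (1 : ℝ) hNmeas]
    simp [hm, Measure.real]
  have hphiint : Integrable (fun z => φ x₀ z) μ := by
    have : (fun z => φ x₀ z) = fun z => (φ x₀ z - pa) + pa := by funext z; ring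
    rw [this]
    exact hsecint.add (integrable_const pa)
  have hmeq : m = pa := by
    have : ∫ z, (φ x₀ z - pa) ∂μ = m - pa := by
      rw [integral_sub hphiint (integrable_const pa), hphix, integral_const]
      simp
    rw [huniv0] at this
    linarith
  have hNint : ∫ z in N, (φ x₀ z - pa) ∂μ = 0 := hall N hN𝒞
  have hNphi : ∫ z in N, φ x₀ z ∂μ = m := by
    have hEq : Set.EqOn (fun z => φ x₀ z) (fun _ => (1 : ℝ)) N := by
      intro z hz
      have := hNind z
      rw [Set.indicator_of_mem hz] at this
      exact this
    rw [setIntegral_congr_fun hNmeas hEq, setIntegral_const]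
    simp [hm, Measure.real]
  have hNint2 : ∫ z in N, (φ x₀ z - pa) ∂μ = m - pa * m := by
    rw [integral_sub hphiint.integrableOn (integrable_const pa).integrableOn,
      hNphi, setIntegral_const]
    simp [hm, Measure.real]
    ring
  rw [hNint] at hNint2
  have : pa * (1 - pa) = 0 := by
    rw [hmeq] at hNint2
    linarith
  nlinarith
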